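/- For every positive integer k, √(2πk)·(k/e)^k·e^{1/(12k+1)} ≤ k! ≤ √(2πk)·(k/e)^k·e^{1/(12k)}. -/

import Mathlib

open Real Set Filter Topology


lemma log_upper (t : ℝ) (h0 : 0 ≤ t) (h1 : t < 1) :
    Real.log (1 + t) - Real.log (1 - t) ≤ 2*t + 2/3 * (t^3 / (1 - t^2)) := by
  set F : ℝ → ℝ := fun t => 2*t + 2/3 * (t^3 / (1 - t^2)) - (Real.log (1+t) - Real.log (1-t)) with hF
  have key : ∀ x ∈ Ioo (-1:ℝ) 1, HasDerivAt F (4/3 * x^4 / (1-x^2)^2) x := by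
    intro x hx
    obtain ⟨hxa, hxb⟩ := hx
    have hne : (1 - x^2) ≠ 0 := by nlinarith
    have hp : (1 + x) ≠ 0 := by nlinarith
    have hm : (1 - x) ≠ 0 := by nlinarith
    have h1 : HasDerivAt (fun t : ℝ => 1 - t^2) (-(2*x^1)) x := (hasDerivAt_pow 2 x).const_sub 1
    have h2 : HasDerivAt (fun t : ℝ => t^3) (3*x^2) x := by
      simpa using hasDerivAt_pow 3 x
    have h3 := (h2.div h1 hne).const_mul (2/3 : ℝ)
    have h5 : HasDerivAt (fun t : ℝ => 2*t) 2 x := by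
      simpa using (hasDerivAt_id x).const_mul (2:ℝ)
    have h6 : HasDerivAt (fun t : ℝ => Real.log (1+t)) (1/(1+x)) x := by
      simpa using ((hasDerivAt_id x).const_add (1:ℝ)).log hp
    have h7 : HasDerivAt (fun t : ℝ => Real.log (1-t)) (-1/(1-x)) x := by
      simpa using ((hasDerivAt_id x).const_sub (1:ℝ)).log hm
    have := (h5.add h3).sub (h6.sub h7)
    refine this.congr_deriv ?_
    field_simp
    ring
  have hmono : MonotoneOn F (Ico (0:ℝ) 1) := by
    apply monotoneOn_of_deriv_nonneg (convex_Ico 0 1)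
    · intro x hx
      exact (key x ⟨by linarith [hx.1], hx.2⟩).differentiableAt.continuousAt.continuousWithinAt
    · intro x hx
      rw [interior_Ico] at hx
      exact (key x ⟨by linarith [hx.1], hx.2⟩).differentiableAt.differentiableWithinAt
    · intro x hx
      rw [interior_Ico] at hx
      rw [(key x ⟨by linarith [hx.1], hx.2⟩).deriv]
      positivity
  have h00 : F 0 = 0 := by simp [hF]
  have := hmono (show (0:ℝ) ∈ Ico (0:ℝ) 1 by constructor <;> norm_num)
    (show t ∈ Ico (0:ℝ) 1 from ⟨h0, h1⟩) h0
  rw [h00] at this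
  simp only [hF] at this
  linarith

lemma log_lower (t : ℝ) (h0 : 0 ≤ t) (h1 : t < 1) :
    2*t + 2/3 * t^3 ≤ Real.log (1 + t) - Real.log (1 - t) := by
  set F : ℝ → ℝ := fun t => (Real.log (1+t) - Real.log (1-t)) - (2*t + 2/3 * t^3) with hF
  have key : ∀ x ∈ Ioo (-1:ℝ) 1, HasDerivAt F (2 * x^4 / (1-x^2)) x := by
    intro x hx
    obtain ⟨hxa, hxb⟩ := hx
    have hne : (1 - x^2) ≠ 0 := by nlinarith
    have hp : (1 + x) ≠ 0 := by nlinarith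
    have hm : (1 - x) ≠ 0 := by nlinarith
    have h2 : HasDerivAt (fun t : ℝ => t^3) (3*x^2) x := by
      simpa using hasDerivAt_pow 3 x
    have h3 := h2.const_mul (2/3 : ℝ)
    have h5 : HasDerivAt (fun t : ℝ => 2*t) 2 x := by
      simpa using (hasDerivAt_id x).const_mul (2:ℝ)
    have h6 : HasDerivAt (fun t : ℝ => Real.log (1+t)) (1/(1+x)) x := by
      simpa using ((hasDerivAt_id x).const_add (1:ℝ)).log hp
    have h7 : HasDerivAt (fun t : ℝ => Real.log (1-t)) (-1/(1-x)) x := by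
      simpa using ((hasDerivAt_id x).const_sub (1:ℝ)).log hm
    have := (h6.sub h7).sub (h5.add h3)
    refine this.congr_deriv ?_
    field_simp
    ring
  have hmono : MonotoneOn F (Ico (0:ℝ) 1) := by
    apply monotoneOn_of_deriv_nonneg (convex_Ico 0 1)
    · intro x hx
      exact (key x ⟨by linarith [hx.1], hx.2⟩).differentiableAt.continuousAt.continuousWithinAt
    · intro x hx
      rw [interior_Ico] at hx
      exact (key x ⟨by linarith [hx.1], hx.2⟩).differentiableAt.differentiableWithinAt
    · intro x hx
      rw [interior_Ico] at hx
      rw [(key x ⟨by linarith [hx.1], hx.2⟩).deriv]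
      have : (0:ℝ) < 1 - x^2 := by nlinarith [hx.1, hx.2]
      positivity
  have h00 : F 0 = 0 := by simp [hF]
  have := hmono (show (0:ℝ) ∈ Ico (0:ℝ) 1 by constructor <;> norm_num)
    (show t ∈ Ico (0:ℝ) 1 from ⟨h0, h1⟩) h0
  rw [h00] at this
  simp only [hF] at this
  linarith

lemma step_bounds (x : ℝ) (hx : 1 ≤ x) :
    1/(12*x+1) - 1/(12*x+13) ≤ (x + 1/2) * (Real.log (x+1) - Real.log x) - 1 ∧
    (x + 1/2) * (Real.log (x+1) - Real.log x) - 1 ≤ 1/(12*x) - 1/(12*(x+1)) := by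
  have hx0 : 0 < x := by linarith
  set t : ℝ := 1/(2*x+1) with hdef
  have ht0 : 0 < t := by positivity
  have ht1 : t < 1 := by
    rw [hdef, div_lt_one (by linarith)]; linarith
  have h1t : 0 < 1 - t := by linarith
  have h1t' : 0 < 1 + t := by linarith
  have hlog : Real.log (x+1) - Real.log x = Real.log (1+t) - Real.log (1-t) := by
    rw [← Real.log_div (by linarith) (by linarith),
        ← Real.log_div (by linarith) (by linarith)]
    congr 1
    rw [hdef]
    field_simp
    ring
  have hxt : x + 1/2 = 1/(2*t) := by rw [hdef]; field_simp
  constructor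
  · have h := log_lower t ht0.le ht1
    have key : (x + 1/2) * (2*t + 2/3 * t^3) - 1 = 1/(3*(2*x+1)^2) := by
      rw [hdef]; field_simp; ring
    have hmul : (x + 1/2) * (2*t + 2/3 * t^3) ≤ (x + 1/2) * (Real.log (1+t) - Real.log (1-t)) :=
      mul_le_mul_of_nonneg_left h (by linarith)
    have htail : 1/(12*x+1) - 1/(12*x+13) ≤ 1/(3*(2*x+1)^2) := by
      rw [div_sub_div _ _ (by linarith) (by linarith), div_le_div_iff₀ (by positivity) (by positivity)]
      nlinarith
    rw [hlog]
    linarith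
  · have h := log_upper t ht0.le ht1
    have key : (x + 1/2) * (2*t + 2/3 * (t^3/(1-t^2))) - 1 = 1/(12*x) - 1/(12*(x+1)) := by
      rw [hdef]
      have h2 : (2*x+1) ≠ 0 := by linarith
      have h4 : (4*x^2+4*x) ≠ 0 := by positivity
      have hsub : (1 : ℝ) - (1/(2*x+1))^2 = (4*x^2+4*x)/(2*x+1)^2 := by
        field_simp
        ring
      rw [hsub]
      field_simp
      ring
    have hmul : (x + 1/2) * (Real.log (1+t) - Real.log (1-t)) ≤ (x + 1/2) * (2*t + 2/3 * (t^3/(1-t^2))) :=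
      mul_le_mul_of_nonneg_left h (by linarith)
    rw [hlog]
    linarith

noncomputable def aa (k : ℕ) : ℝ := Real.log k.factorial - ((k:ℝ) + 1/2) * Real.log k + k

lemma aa_diff (k : ℕ) (hk : 1 ≤ k) :
    aa k - aa (k+1) = ((k:ℝ) + 1/2) * (Real.log ((k:ℝ)+1) - Real.log k) - 1 := by
  have hk0 : (0:ℝ) < k := by exact_mod_cast hk
  have hfac : ((k+1).factorial : ℝ) = ((k:ℝ)+1) * k.factorial := by
    rw [Nat.factorial_succ]; push_cast; ring
  unfold aa
  rw [hfac, Real.log_mul (by linarith) (by positivity)]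
  push_cast
  ring

lemma aa_tendsto : Tendsto aa atTop (𝓝 (Real.log (Real.sqrt (2*π)))) := by
  have hlim : Tendsto (fun k => Stirling.stirlingSeq k * Real.sqrt 2) atTop
      (𝓝 (Real.sqrt π * Real.sqrt 2)) :=
    Stirling.tendsto_stirlingSeq_sqrt_pi.mul_const _
  have hne : Real.sqrt π * Real.sqrt 2 ≠ 0 := by positivity
  have hlog : Tendsto (fun k => Real.log (Stirling.stirlingSeq k * Real.sqrt 2)) atTop
      (𝓝 (Real.log (Real.sqrt π * Real.sqrt 2))) := hlim.log hne
  have heq : Real.log (Real.sqrt π * Real.sqrt 2) = Real.log (Real.sqrt (2*π)) := by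
    rw [← Real.sqrt_mul pi_pos.le, mul_comm]
  rw [heq] at hlog
  refine hlog.congr' ?_
  filter_upwards [eventually_ge_atTop 1] with k hk
  have hk0 : (0:ℝ) < k := by exact_mod_cast hk
  rw [Stirling.stirlingSeq]
  have hd : Real.sqrt (2*(k:ℝ)) * ((k:ℝ) / Real.exp 1) ^ k ≠ 0 := by positivity
  rw [Real.log_mul (by positivity) (by positivity), Real.log_div (by positivity) hd,
      Real.log_mul (by positivity) (by positivity), Real.log_pow,
      Real.log_div (by positivity) (Real.exp_ne_zero 1), Real.log_exp,
      Real.log_sqrt (by positivity), Real.log_sqrt (by norm_num),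
      Real.log_mul (by norm_num) (by positivity)]
  unfold aa
  ring

lemma aa_bounds (k : ℕ) (hk : 1 ≤ k) :
    Real.log (Real.sqrt (2*π)) + 1/(12*(k:ℝ)+1) ≤ aa k ∧
    aa k ≤ Real.log (Real.sqrt (2*π)) + 1/(12*(k:ℝ)) := by
  set L := Real.log (Real.sqrt (2*π))
  -- monotone sequences
  have hu : ∀ n : ℕ, 1 ≤ n → aa n - 1/(12*(n:ℝ)) ≤ aa (n+1) - 1/(12*((n:ℝ)+1)) := by
    intro n hn
    have hn1 : (1:ℝ) ≤ n := by exact_mod_cast hn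
    have := (step_bounds n hn1).2
    have hd := aa_diff n hn
    linarith
  have hv : ∀ n : ℕ, 1 ≤ n → aa (n+1) - 1/(12*((n:ℝ)+1)+1) ≤ aa n - 1/(12*(n:ℝ)+1) := by
    intro n hn
    have hn1 : (1:ℝ) ≤ n := by exact_mod_cast hn
    have := (step_bounds n hn1).1
    have hd := aa_diff n hn
    have he : 12*((n:ℝ)+1)+1 = 12*(n:ℝ)+13 := by ring
    rw [he]
    linarith
  have hzero : Tendsto (fun n : ℕ => 1/(12*(n:ℝ))) atTop (𝓝 0) := by
    have h12 : Tendsto (fun n : ℕ => 12*(n:ℝ)) atTop atTop :=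
      (tendsto_natCast_atTop_atTop).const_mul_atTop (by norm_num)
    simpa only [one_div, Pi.inv_def] using h12.inv_tendsto_atTop
  have hzero1 : Tendsto (fun n : ℕ => 1/(12*(n:ℝ)+1)) atTop (𝓝 0) := by
    have h12 : Tendsto (fun n : ℕ => 12*(n:ℝ)+1) atTop atTop :=
      tendsto_atTop_add_const_right _ 1 ((tendsto_natCast_atTop_atTop).const_mul_atTop (by norm_num))
    simpa only [one_div, Pi.inv_def] using h12.inv_tendsto_atTop
  have hul : Tendsto (fun n : ℕ => aa n - 1/(12*(n:ℝ))) atTop (𝓝 L) := by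
    simpa only [sub_zero] using aa_tendsto.sub hzero
  have hvl : Tendsto (fun n : ℕ => aa n - 1/(12*(n:ℝ)+1)) atTop (𝓝 L) := by
    simpa only [sub_zero] using aa_tendsto.sub hzero1
  constructor
  · -- v decreasing: aa k - 1/(12k+1) ≥ L
    have : L ≤ aa k - 1/(12*(k:ℝ)+1) := by
      refine le_of_tendsto hvl ?_
      filter_upwards [eventually_ge_atTop k] with n hn
      induction n, hn using Nat.le_induction with
      | base => exact le_refl _
      | succ m hm ih =>
        have := hv m (le_trans hk hm)
        push_cast at this ⊢
        linarith
    linarith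
  · have : aa k - 1/(12*(k:ℝ)) ≤ L := by
      refine ge_of_tendsto hul ?_
      filter_upwards [eventually_ge_atTop k] with n hn
      induction n, hn using Nat.le_induction with
      | base => exact le_refl _
      | succ m hm ih =>
        have := hu m (le_trans hk hm)
        push_cast at this ⊢
        linarith
    linarith

/-- Robbins' refinement of Stirling's approximation. -/
theorem stmt_10 (k : ℕ) (hk : 1 ≤ k) :
    Real.sqrt (2 * Real.pi * k) * (k / Real.exp 1) ^ k * Real.exp (1 / (12 * k + 1))
      ≤ (k.factorial : ℝ) ∧
    (k.factorial : ℝ)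
      ≤ Real.sqrt (2 * Real.pi * k) * (k / Real.exp 1) ^ k * Real.exp (1 / (12 * k)) := by
  have hk0 : (0:ℝ) < k := by exact_mod_cast hk
  have hL : Real.log (Real.sqrt (2*π)) = Real.log (2*π) / 2 :=
    Real.log_sqrt (by positivity)
  have hb := aa_bounds k hk
  have hfac : (0:ℝ) < k.factorial := by exact_mod_cast k.factorial_pos
  have hlogfac : Real.log k.factorial = aa k + ((k:ℝ)+1/2)*Real.log k - k := by
    unfold aa; ring
  have hsq : Real.log (Real.sqrt (2*π*(k:ℝ))) = Real.log (2*π)/2 + Real.log k / 2 := by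
    rw [Real.log_sqrt (by positivity), Real.log_mul (by positivity) (by positivity)]
    ring
  have hpow : Real.log (((k:ℝ)/Real.exp 1)^k) = (k:ℝ) * Real.log k - k := by
    rw [Real.log_pow, Real.log_div (by positivity) (Real.exp_ne_zero 1), Real.log_exp]
    ring
  have hexp : ((k:ℝ)+1/2)*Real.log k = (k:ℝ)*Real.log k + Real.log k/2 := by ring
  constructor
  · rw [← Real.log_le_log_iff (by positivity) hfac,
        Real.log_mul (by positivity) (Real.exp_ne_zero _),
        Real.log_mul (by positivity) (by positivity),
        Real.log_exp, hlogfac, hsq, hpow]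
    have h1 := hb.1
    rw [hL] at h1
    linarith
  · rw [← Real.log_le_log_iff hfac (by positivity),
        Real.log_mul (by positivity) (Real.exp_ne_zero _),
        Real.log_mul (by positivity) (by positivity),
        Real.log_exp, hlogfac, hsq, hpow]
    have h2 := hb.2
    rw [hL] at h2
    linarith
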